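/- Oracle inequality for the data-driven trimming level with a fixed classifier. Let (Y_1,X_1),…,(Y_n,X_n) be i.i.d. with law P on {0,1}×ℝ^p, let g be a fixed classifier and α_max ∈ (0,1). Define the penalty pen(α) = (1/(1−α)) √(ln(n)/(2n)) for α ∈ [0, α_max]. Suppose α̂ is a measurable function of the sample, taking values in [0, α_max], such that for every realization of the sample and every α ∈ [0, α_max] one has R_{n,α̂}(g) + pen(α̂) ≤ R_{n,α}(g) + pen(α). Then E[R_{α̂}(g)] ≤ inf_{α ∈ [0,α_max]} ( R_α(g) + pen(α) + √(R(g))/(√n (1−α)) ) + (1/(1−α_max)) √(2π/n) + 1/(n (1−α_max)²). -/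

import Mathlib

open MeasureTheory ProbabilityTheory

noncomputable section

/-- The classification error `R(g) = P({(y,x) : g(x) ≠ y})`. -/
def classErr {p : ℕ} (P : Measure (Bool × (Fin p → ℝ))) (g : (Fin p → ℝ) → Bool) : ℝ :=
  (P {z | g z.2 ≠ z.1}).toReal

/-- Trimmed classification error `R_α(g) = (R(g) − α)_+ / (1 − α)`. -/
def trimmedErr {p : ℕ} (P : Measure (Bool × (Fin p → ℝ))) (α : ℝ)
    (g : (Fin p → ℝ) → Bool) : ℝ :=
  max (classErr P g - α) 0 / (1 - α)

/-- Empirical classification error `R_n(g) = (1/n) Σ_i 1{g(X_i) ≠ Y_i}`. -/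
def empErr {p : ℕ} (n : ℕ) (ξ : Fin n → Bool × (Fin p → ℝ))
    (g : (Fin p → ℝ) → Bool) : ℝ :=
  (1 / n) * ∑ i, if g (ξ i).2 ≠ (ξ i).1 then (1 : ℝ) else 0

/-- Empirical trimmed classification error `R_{n,α}(g) = (R_n(g) − α)_+/(1−α)`. -/
def empTrimmedErr {p : ℕ} (n : ℕ) (α : ℝ) (ξ : Fin n → Bool × (Fin p → ℝ))
    (g : (Fin p → ℝ) → Bool) : ℝ :=
  max (empErr n ξ g - α) 0 / (1 - α)

/-- Cauchy-Schwarz style bound: `(E|Z|)^2 ≤ E[Z^2]` on a probability space. -/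
lemma sq_integral_abs_le {Ω : Type*} [MeasurableSpace Ω] (μ : Measure Ω)
    [IsProbabilityMeasure μ] {Z : Ω → ℝ} (hZ : MemLp Z 2 μ) :
    (∫ ω, |Z ω| ∂μ) ^ 2 ≤ ∫ ω, (Z ω) ^ 2 ∂μ := by
  have habs : MemLp (fun ω => |Z ω|) 2 μ := hZ.abs
  have h := variance_nonneg (fun ω => |Z ω|) μ
  rw [variance_eq_sub habs] at h
  have h2 : (∫ ω, ((fun ω => |Z ω|) ^ 2) ω ∂μ) = ∫ ω, (Z ω) ^ 2 ∂μ := by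
    refine integral_congr_ae (ae_of_all _ fun ω => ?_)
    simp [sq_abs]
  rw [h2] at h
  linarith

set_option maxHeartbeats 2000000 in
/-- Theorem 1: oracle inequality for the data-driven trimming level `α̂` chosen by
penalized empirical trimmed risk minimization with a fixed classifier `g`. -/
theorem oracle_fixed_classifier {p : ℕ}
    (P : Measure (Bool × (Fin p → ℝ))) [IsProbabilityMeasure P]
    {g : (Fin p → ℝ) → Bool} (hg : Measurable g)
    {αmax : ℝ} (hαmax : αmax ∈ Set.Ioo (0 : ℝ) 1)
    {Ω : Type*} [MeasurableSpace Ω] (μ : Measure Ω) [IsProbabilityMeasure μ]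
    {n : ℕ} (hn : 0 < n) (ξ : Fin n → Ω → Bool × (Fin p → ℝ))
    (hmeas : ∀ i, Measurable (ξ i))
    (hindep : iIndepFun ξ μ)
    (hlaw : ∀ i, μ.map (ξ i) = P)
    (pen : ℝ → ℝ)
    (hpen : ∀ α, pen α = (1 / (1 - α)) * Real.sqrt (Real.log n / (2 * n)))
    (αhat : Ω → ℝ) (hαhat_meas : Measurable αhat)
    (hαhat_mem : ∀ ω, αhat ω ∈ Set.Icc (0 : ℝ) αmax)
    (hαhat_min : ∀ ω, ∀ α ∈ Set.Icc (0 : ℝ) αmax,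
      empTrimmedErr n (αhat ω) (fun i => ξ i ω) g + pen (αhat ω) ≤
        empTrimmedErr n α (fun i => ξ i ω) g + pen α) :
    (∫ ω, trimmedErr P (αhat ω) g ∂μ) ≤
      sInf ((fun α => trimmedErr P α g + pen α +
          Real.sqrt (classErr P g) / (Real.sqrt n * (1 - α))) '' Set.Icc (0 : ℝ) αmax) +
        (1 / (1 - αmax)) * Real.sqrt (2 * Real.pi / n) +
        1 / (n * (1 - αmax) ^ 2) := by
  obtain ⟨hα0, hα1⟩ := hαmax
  have hnR : (0:ℝ) < n := by exact_mod_cast hn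
  set R : ℝ := classErr P g with hRdef
  set A : Set (Bool × (Fin p → ℝ)) := {z | g z.2 ≠ z.1} with hAdef
  have hA : MeasurableSet A := by
    have h : A = {z : Bool × (Fin p → ℝ) | g z.2 = z.1}ᶜ := by
      ext z; simp [hAdef]
    rw [h]
    exact (measurableSet_eq_fun (hg.comp measurable_snd) measurable_fst).compl
  have hR0 : 0 ≤ R := ENNReal.toReal_nonneg
  have hR1 : R ≤ 1 := by
    have h := prob_le_one (μ := P) (s := A)
    have : (P A).toReal ≤ (1 : ENNReal).toReal :=
      ENNReal.toReal_mono (by simp) h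
    simpa [hRdef, classErr, ← hAdef] using this
  -- the indicator function
  set f : (Bool × (Fin p → ℝ)) → ℝ := fun z => if g z.2 ≠ z.1 then 1 else 0 with hfdef
  have hf_eq : f = A.indicator (fun _ => (1:ℝ)) := by
    ext z; by_cases h : g z.2 ≠ z.1 <;> simp [hfdef, hAdef, h, Set.indicator]
  have hf_meas : Measurable f := by
    rw [hf_eq]; exact measurable_const.indicator hA
  have hf_int : ∫ z, f z ∂P = R := by
    rw [hf_eq]
    simpa [hRdef, classErr, ← hAdef, measureReal_def] using integral_indicator_const (1:ℝ) hA
  -- random variables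
  set X : Fin n → Ω → ℝ := fun i ω => f (ξ i ω) with hXdef
  have hX_meas : ∀ i, Measurable (X i) := fun i => hf_meas.comp (hmeas i)
  have hX01 : ∀ i ω, X i ω = 0 ∨ X i ω = 1 := by
    intro i ω
    by_cases h : g (ξ i ω).2 ≠ (ξ i ω).1
    · right; simp only [hXdef, hfdef]; rw [if_pos h]
    · left; simp only [hXdef, hfdef]; rw [if_neg h]
  have hX_mem : ∀ i ω, X i ω ∈ Set.Icc (0:ℝ) 1 := by
    intro i ω
    rcases hX01 i ω with h | h <;> rw [h] <;> norm_num
  have hX_L2 : ∀ i, MemLp (X i) 2 μ := fun i =>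
    memLp_of_bounded (ae_of_all _ (hX_mem i)) (hX_meas i).aestronglyMeasurable 2
  have hX_int : ∀ i, ∫ ω, X i ω ∂μ = R := by
    intro i
    calc ∫ ω, X i ω ∂μ = ∫ z, f z ∂(μ.map (ξ i)) :=
          (integral_map (hmeas i).aemeasurable hf_meas.aestronglyMeasurable).symm
      _ = R := by rw [hlaw i, hf_int]
  have hX_sq : ∀ i ω, X i ω ^ 2 = X i ω := by
    intro i ω
    rcases hX01 i ω with h | h <;> rw [h] <;> norm_num
  have hX_var : ∀ i, variance (X i) μ = R - R ^ 2 := by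
    intro i
    rw [variance_eq_sub (hX_L2 i)]
    have h : (∫ ω, ((X i) ^ 2) ω ∂μ) = R := by
      rw [show ((X i) ^ 2 : Ω → ℝ) = X i from funext fun ω => by
        simpa using hX_sq i ω]
      exact hX_int i
    rw [h, hX_int i]
  -- empirical error as function of ω
  set Rn : Ω → ℝ := fun ω => empErr n (fun i => ξ i ω) g with hRndef
  have hRn_eq : ∀ ω, Rn ω = (1 / n) * ∑ i, X i ω := fun ω => rfl
  have hRn_meas : Measurable Rn := by
    have h : Measurable fun ω => ∑ i, X i ω := Finset.measurable_sum _ fun i _ => hX_meas i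
    have := h.const_mul (1 / (n:ℝ))
    simpa [hRndef, empErr, hXdef, hfdef] using this
  have hRn_mem : ∀ ω, Rn ω ∈ Set.Icc (0:ℝ) 1 := by
    intro ω
    rw [hRn_eq]
    constructor
    · have : (0:ℝ) ≤ ∑ i, X i ω := Finset.sum_nonneg fun i _ => (hX_mem i ω).1
      positivity
    · have hsum : ∑ i, X i ω ≤ (n:ℝ) := by
        calc ∑ i, X i ω ≤ ∑ _i : Fin n, (1:ℝ) :=
              Finset.sum_le_sum fun i _ => (hX_mem i ω).2
          _ = n := by simp
      calc (1 / (n:ℝ)) * ∑ i, X i ω ≤ (1 / (n:ℝ)) * n :=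
            mul_le_mul_of_nonneg_left hsum (by positivity)
        _ = 1 := by field_simp
  have hRn_int_eq : ∫ ω, Rn ω ∂μ = R := by
    have h1 : ∫ ω, (∑ i, X i ω) ∂μ = ∑ i : Fin n, ∫ ω, X i ω ∂μ :=
      integral_finset_sum _ fun i _ => ((hX_L2 i).integrable one_le_two)
    calc ∫ ω, Rn ω ∂μ = ∫ ω, (1 / (n:ℝ)) * ∑ i, X i ω ∂μ := by
          simp_rw [hRn_eq]
      _ = (1 / (n:ℝ)) * ∫ ω, (∑ i, X i ω) ∂μ := integral_const_mul _ _
      _ = (1 / (n:ℝ)) * ∑ i : Fin n, ∫ ω, X i ω ∂μ := by rw [h1]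
      _ = (1 / (n:ℝ)) * (n * R) := by simp [hX_int, mul_comm]
      _ = R := by field_simp
  -- variance of Rn
  have hSum_var : variance (fun ω => ∑ i, X i ω) μ = (n:ℝ) * (R - R ^ 2) := by
    have h := IndepFun.variance_sum (μ := μ) (X := X) (s := Finset.univ)
      (fun i _ => hX_L2 i)
      (fun i _ j _ hij => (hindep.comp (fun _ => f) (fun _ => hf_meas)).indepFun hij)
    have heq : (fun ω => ∑ i, X i ω) = ∑ i : Fin n, X i := by
      ext ω; simp
    rw [heq, h]
    calc ∑ i : Fin n, variance (X i) μ = ∑ _i : Fin n, (R - R ^ 2) :=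
          Finset.sum_congr rfl fun i _ => hX_var i
      _ = (n:ℝ) * (R - R ^ 2) := by
          rw [Finset.sum_const, Finset.card_univ, Fintype.card_fin, nsmul_eq_mul]
  have hRn_var : variance Rn μ = (R - R ^ 2) / n := by
    have heq : Rn = (1 / (n:ℝ)) • (fun ω => ∑ i, X i ω) := by
      ext ω; rw [hRn_eq]; simp
    rw [heq, variance_smul, hSum_var]
    field_simp
  -- the centered variable
  set Z : Ω → ℝ := fun ω => Rn ω - R with hZdef
  have hZ_meas : Measurable Z := hRn_meas.sub measurable_const
  have hZapp : ∀ ω, Z ω = Rn ω - R := fun _ => rfl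
  have hZ_L2 : MemLp Z 2 μ := by
    refine memLp_of_bounded (a := (-1:ℝ)) (b := (1:ℝ)) ?_ hZ_meas.aestronglyMeasurable 2
    filter_upwards with ω
    have h1 := (hRn_mem ω).1
    have h2 := (hRn_mem ω).2
    rw [Set.mem_Icc, hZapp]
    constructor <;> nlinarith
  have hZ_int : Integrable Z μ := hZ_L2.integrable one_le_two
  have hZ_sq : ∫ ω, (Z ω) ^ 2 ∂μ = (R - R ^ 2) / n := by
    have hRn_L2 : MemLp Rn 2 μ :=
      memLp_of_bounded (ae_of_all _ hRn_mem) hRn_meas.aestronglyMeasurable 2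
    have h := variance_eq_integral hRn_L2.aestronglyMeasurable.aemeasurable
    rw [hRn_var] at h
    rw [h]
    refine integral_congr_ae (ae_of_all _ fun ω => ?_)
    simp [hZapp, hRn_int_eq]
  -- E|Z| and its bounds
  set m : ℝ := ∫ ω, |Z ω| ∂μ with hmdef
  have hm0 : 0 ≤ m := integral_nonneg fun ω => abs_nonneg _
  have hm_sq : m ^ 2 ≤ (R - R ^ 2) / n := by
    rw [← hZ_sq]; exact sq_integral_abs_le μ hZ_L2
  have hm_le1 : m ≤ Real.sqrt R / Real.sqrt n := by
    rw [← Real.sqrt_div hR0]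
    have h2 : m ^ 2 ≤ R / n :=
      hm_sq.trans (div_le_div_of_nonneg_right (by nlinarith) hnR.le)
    calc m = Real.sqrt (m ^ 2) := by rw [Real.sqrt_sq hm0]
      _ ≤ Real.sqrt (R / n) := Real.sqrt_le_sqrt h2
  have hm_le2 : m ≤ Real.sqrt (2 * Real.pi / n) := by
    have hpi : (1:ℝ) / 4 ≤ 2 * Real.pi := by
      nlinarith [Real.pi_gt_three]
    have h2 : m ^ 2 ≤ 2 * Real.pi / n := by
      calc m ^ 2 ≤ (R - R ^ 2) / n := hm_sq
        _ ≤ (1 / 4) / n :=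
            div_le_div_of_nonneg_right (by nlinarith [sq_nonneg (2 * R - 1)]) hnR.le
        _ ≤ 2 * Real.pi / n := div_le_div_of_nonneg_right hpi hnR.le
    calc m = Real.sqrt (m ^ 2) := by rw [Real.sqrt_sq hm0]
      _ ≤ Real.sqrt (2 * Real.pi / n) := Real.sqrt_le_sqrt h2
  -- positive parts of Z
  have hZp_int : Integrable (fun ω => max (Z ω) 0) μ := by
    refine hZ_int.mono (hZ_meas.max measurable_const).aestronglyMeasurable ?_
    filter_upwards with ω
    rw [Real.norm_eq_abs, Real.norm_eq_abs]
    rcases le_total (Z ω) 0 with h | h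
    · rw [max_eq_right h]; simp [abs_nonneg]
    · rw [max_eq_left h]
  have hZm_int : Integrable (fun ω => max (-Z ω) 0) μ := by
    refine hZ_int.neg.mono ((hZ_meas.neg).max measurable_const).aestronglyMeasurable ?_
    filter_upwards with ω
    rw [Real.norm_eq_abs, Real.norm_eq_abs]
    rcases le_total (-Z ω) 0 with h | h
    · rw [max_eq_right h]; simp [abs_nonneg]
    · rw [max_eq_left h]; exact le_of_eq (by simp)
  have hZp_le : ∫ ω, max (Z ω) 0 ∂μ ≤ m := by
    refine integral_mono hZp_int hZ_int.abs fun ω => ?_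
    exact max_le (le_abs_self _) (abs_nonneg _)
  have hZm_le : ∫ ω, max (-Z ω) 0 ∂μ ≤ m := by
    refine integral_mono hZm_int hZ_int.abs fun ω => ?_
    refine max_le ?_ (abs_nonneg _)
    rw [← abs_neg]; exact le_abs_self _
  -- positivity facts
  have hcm : (0:ℝ) < 1 - αmax := by linarith
  -- the trimmed error of the data-driven level, as a function of ω
  set F : Ω → ℝ := fun ω => trimmedErr P (αhat ω) g with hFdef
  have hF_meas : Measurable F := by
    have h : Measurable fun ω => max (R - αhat ω) 0 / (1 - αhat ω) :=
      ((measurable_const.sub hαhat_meas).max measurable_const).div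
        (measurable_const.sub hαhat_meas)
    simpa [hFdef, trimmedErr, hRdef] using h
  have hF_bound : ∀ ω, F ω ∈ Set.Icc (0:ℝ) (1 / (1 - αmax)) := by
    intro ω
    obtain ⟨ha0, haM⟩ := hαhat_mem ω
    have hca : (0:ℝ) < 1 - αhat ω := by linarith
    constructor
    · exact div_nonneg (le_max_right _ _) hca.le
    · show max (R - αhat ω) 0 / (1 - αhat ω) ≤ 1 / (1 - αmax)
      have hnum : max (R - αhat ω) 0 ≤ 1 := max_le (by linarith) zero_le_one
      calc max (R - αhat ω) 0 / (1 - αhat ω) ≤ 1 / (1 - αhat ω) :=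
            div_le_div_of_nonneg_right hnum hca.le
        _ ≤ 1 / (1 - αmax) := by
          apply one_div_le_one_div_of_le hcm
          linarith
  have hF_int : Integrable F μ := by
    refine Integrable.mono' (integrable_const (1 / (1 - αmax))) hF_meas.aestronglyMeasurable ?_
    filter_upwards with ω
    rw [Real.norm_eq_abs, abs_of_nonneg (hF_bound ω).1]
    exact (hF_bound ω).2
  -- pointwise oracle inequality
  have hpoint : ∀ ω, ∀ α ∈ Set.Icc (0:ℝ) αmax,
      F ω ≤ trimmedErr P α g + pen α + max (Z ω) 0 / (1 - α)
        + max (-Z ω) 0 / (1 - αmax) := by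
    intro ω α hα
    obtain ⟨hα0', hαM'⟩ := hα
    obtain ⟨ha0, haM⟩ := hαhat_mem ω
    have hca : (0:ℝ) < 1 - αhat ω := by linarith
    have hcα : (0:ℝ) < 1 - α := by linarith
    have hZω : Z ω = Rn ω - R := rfl
    -- step 1 : trimmedErr at αhat ≤ empTrimmedErr at αhat + (R - Rn)_+/(1-αmax)
    have h1 : F ω ≤ empTrimmedErr n (αhat ω) (fun i => ξ i ω) g
        + max (-Z ω) 0 / (1 - αmax) := by
      have hnum : max (R - αhat ω) 0 ≤ max (Rn ω - αhat ω) 0 + max (-Z ω) 0 := by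
        refine max_le ?_ (by positivity)
        have h1 := le_max_left (Rn ω - αhat ω) 0
        have h2 := le_max_left (-Z ω) 0
        rw [hZω] at h2
        linarith
      have hstep : F ω ≤ (max (Rn ω - αhat ω) 0 + max (-Z ω) 0) / (1 - αhat ω) := by
        show max (R - αhat ω) 0 / (1 - αhat ω) ≤ _
        exact div_le_div_of_nonneg_right hnum hca.le
      rw [add_div] at hstep
      have hdiv : max (-Z ω) 0 / (1 - αhat ω) ≤ max (-Z ω) 0 / (1 - αmax) :=
        div_le_div_of_nonneg_left (le_max_right _ _) hcm (by linarith)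
      have hET : empTrimmedErr n (αhat ω) (fun i => ξ i ω) g
          = max (Rn ω - αhat ω) 0 / (1 - αhat ω) := rfl
      rw [hET]
      linarith
    -- step 2 : empTrimmedErr at αhat ≤ empTrimmedErr at α + pen α
    have hpen_nonneg : 0 ≤ pen (αhat ω) := by
      rw [hpen]
      positivity
    have h2 : empTrimmedErr n (αhat ω) (fun i => ξ i ω) g ≤
        empTrimmedErr n α (fun i => ξ i ω) g + pen α := by
      have := hαhat_min ω α ⟨hα0', hαM'⟩
      linarith
    -- step 3 : empTrimmedErr at α ≤ trimmedErr at α + (Rn - R)_+/(1-α)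
    have h3 : empTrimmedErr n α (fun i => ξ i ω) g ≤
        trimmedErr P α g + max (Z ω) 0 / (1 - α) := by
      have hnum : max (Rn ω - α) 0 ≤ max (R - α) 0 + max (Z ω) 0 := by
        refine max_le ?_ (by positivity)
        have h1 := le_max_left (R - α) 0
        have h2 := le_max_left (Z ω) 0
        rw [hZω] at h2
        linarith
      have hstep : empTrimmedErr n α (fun i => ξ i ω) g ≤
          (max (R - α) 0 + max (Z ω) 0) / (1 - α) := by
        show max (Rn ω - α) 0 / (1 - α) ≤ _
        exact div_le_div_of_nonneg_right hnum hcα.le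
      rw [add_div] at hstep
      exact hstep
    linarith
  -- integrate the pointwise inequality
  have hmain : ∀ α ∈ Set.Icc (0:ℝ) αmax,
      (∫ ω, F ω ∂μ) ≤ trimmedErr P α g + pen α + Real.sqrt R / (Real.sqrt n * (1 - α))
        + (1 / (1 - αmax)) * Real.sqrt (2 * Real.pi / n) := by
    intro α hα
    obtain ⟨hα0', hαM'⟩ := hα
    have hcα : (0:ℝ) < 1 - α := by linarith
    have hint : Integrable (fun ω => trimmedErr P α g + pen α + max (Z ω) 0 / (1 - α)
        + max (-Z ω) 0 / (1 - αmax)) μ := by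
      refine Integrable.add (Integrable.add ?_ ?_) ?_
      · exact integrable_const _
      · exact hZp_int.div_const _
      · exact hZm_int.div_const _
    have step1 : (∫ ω, F ω ∂μ) ≤ ∫ ω, (trimmedErr P α g + pen α + max (Z ω) 0 / (1 - α)
        + max (-Z ω) 0 / (1 - αmax)) ∂μ :=
      integral_mono hF_int hint fun ω => hpoint ω α ⟨hα0', hαM'⟩
    have hint1 : Integrable (fun ω => max (Z ω) 0 / (1 - α)) μ := hZp_int.div_const _
    have hint2 : Integrable (fun ω => max (-Z ω) 0 / (1 - αmax)) μ := hZm_int.div_const _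
    have e1 : ∫ ω, (trimmedErr P α g + pen α + max (Z ω) 0 / (1 - α)
          + max (-Z ω) 0 / (1 - αmax)) ∂μ
        = (∫ ω, (trimmedErr P α g + pen α + max (Z ω) 0 / (1 - α)) ∂μ)
          + ∫ ω, max (-Z ω) 0 / (1 - αmax) ∂μ :=
      integral_add ((integrable_const _).add hint1) hint2
    have e2 : ∫ ω, (trimmedErr P α g + pen α + max (Z ω) 0 / (1 - α)) ∂μ
        = (∫ _ω, (trimmedErr P α g + pen α) ∂μ) + ∫ ω, max (Z ω) 0 / (1 - α) ∂μ :=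
      integral_add (integrable_const _) hint1
    have e2' : (∫ _ω, (trimmedErr P α g + pen α) ∂μ) = trimmedErr P α g + pen α := by
      simp
    have e3 : ∫ ω, max (Z ω) 0 / (1 - α) ∂μ = (∫ ω, max (Z ω) 0 ∂μ) / (1 - α) :=
      integral_div _ _
    have e4 : ∫ ω, max (-Z ω) 0 / (1 - αmax) ∂μ = (∫ ω, max (-Z ω) 0 ∂μ) / (1 - αmax) :=
      integral_div _ _
    have step2 : ∫ ω, (trimmedErr P α g + pen α + max (Z ω) 0 / (1 - α)
        + max (-Z ω) 0 / (1 - αmax)) ∂μ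
        = trimmedErr P α g + pen α + (∫ ω, max (Z ω) 0 ∂μ) / (1 - α)
          + (∫ ω, max (-Z ω) 0 ∂μ) / (1 - αmax) := by
      rw [e1, e2, e2', e3, e4]
    have hb1 : (∫ ω, max (Z ω) 0 ∂μ) / (1 - α) ≤ Real.sqrt R / (Real.sqrt n * (1 - α)) := by
      rw [show Real.sqrt R / (Real.sqrt n * (1 - α)) = (Real.sqrt R / Real.sqrt n) / (1 - α)
        by rw [div_div]]
      exact div_le_div_of_nonneg_right (hZp_le.trans hm_le1) hcα.le
    have hb2 : (∫ ω, max (-Z ω) 0 ∂μ) / (1 - αmax)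
        ≤ (1 / (1 - αmax)) * Real.sqrt (2 * Real.pi / n) := by
      rw [one_div, inv_mul_eq_div]
      exact div_le_div_of_nonneg_right (hZm_le.trans hm_le2) hcm.le
    rw [step2] at step1
    linarith
  -- conclude via the infimum
  have hset_ne : ((fun α => trimmedErr P α g + pen α +
      Real.sqrt R / (Real.sqrt n * (1 - α))) '' Set.Icc (0 : ℝ) αmax).Nonempty :=
    Set.Nonempty.image _ (Set.nonempty_Icc.mpr (by linarith))
  have hlast : (0:ℝ) ≤ 1 / (n * (1 - αmax) ^ 2) := by positivity
  have hsinf : (∫ ω, F ω ∂μ) - (1 / (1 - αmax)) * Real.sqrt (2 * Real.pi / n)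
      ≤ sInf ((fun α => trimmedErr P α g + pen α +
        Real.sqrt R / (Real.sqrt n * (1 - α))) '' Set.Icc (0 : ℝ) αmax) := by
    refine le_csInf hset_ne ?_
    rintro b ⟨α, hα, rfl⟩
    have := hmain α hα
    linarith
  have : (∫ ω, F ω ∂μ) ≤ sInf ((fun α => trimmedErr P α g + pen α +
      Real.sqrt R / (Real.sqrt n * (1 - α))) '' Set.Icc (0 : ℝ) αmax) +
      (1 / (1 - αmax)) * Real.sqrt (2 * Real.pi / n) + 1 / (n * (1 - αmax) ^ 2) := by
    linarith
  exact this
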